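/- arXiv:math/0012127 — 2 statements merged into one kernel-verified Lean document; each statement's English description precedes it below -/
import Mathlib

section
/- Let X be a compact Hausdorff space, A a unital C*-algebra with a unital C(X)-structure ι : C(X,ℂ) → A, and let complex Hilbert spaces H_x (x ∈ X) together with unital *-homomorphisms σ_x : A → B(H_x) satisfy σ_x(ι f) = f(x)·1 for every f ∈ C(X,ℂ) and x ∈ X, and be such that for every a ∈ A the function x ↦ ‖σ_x(a)‖ is lower semi-continuous. If moreover the kernel of σ_x equals I_x for every x ∈ X, then for every a ∈ A the function x ↦ ‖σ_x(a)‖ is continuous on X, and it coincides with x ↦ ‖a_x‖. -/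
open Metric Set Filter Topology

variable {X : Type*} [TopologicalSpace X] [CompactSpace X] [T2Space X]
variable {A : Type*} [CStarAlgebra A]

/-- `fiberIdeal ι x` is the smallest closed two-sided ideal `I_x` of `A` containing
`{ι f : f ∈ C(X,ℂ), f x = 0}`: the intersection of all closed two-sided ideals
containing that set. -/
def fiberIdeal (ι : C(X, ℂ) →⋆ₐ[ℂ] A) (x : X) : Set A :=
  ⋂₀ {S : Set A | IsClosed S ∧ (∃ I : TwoSidedIdeal A, (I : Set A) = S) ∧
      {a : A | ∃ f : C(X, ℂ), f x = 0 ∧ a = ι f} ⊆ S}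

/-- The fibre norm `‖a_x‖ = dist (a, I_x)`, the quotient norm of the image of `a`
in `A / I_x`. -/
noncomputable def fiberNorm (ι : C(X, ℂ) →⋆ₐ[ℂ] A) (x : X) (a : A) : ℝ :=
  Metric.infDist a (fiberIdeal ι x)

section Aux

variable (ι : C(X, ℂ) →⋆ₐ[ℂ] A) (x : X)

/-- The generating set of the fibre ideal. -/
def genSet : Set A := {a : A | ∃ f : C(X, ℂ), f x = 0 ∧ a = ι f}

lemma mem_fiberIdeal_iff {b : A} : b ∈ fiberIdeal ι x ↔ ∀ S : Set A, IsClosed S →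
    (∃ I : TwoSidedIdeal A, (I : Set A) = S) → genSet ι x ⊆ S → b ∈ S := by
  simp only [fiberIdeal, Set.mem_sInter, Set.mem_setOf_eq, and_imp, genSet]

lemma fiberIdeal_zero_mem : (0 : A) ∈ fiberIdeal ι x := by
  rw [mem_fiberIdeal_iff]
  rintro S hS ⟨I, rfl⟩ -
  exact I.zero_mem

lemma fiberIdeal_nonempty : (fiberIdeal ι x).Nonempty :=
  ⟨0, fiberIdeal_zero_mem ι x⟩

lemma fiberIdeal_add_mem {b c : A} (hb : b ∈ fiberIdeal ι x) (hc : c ∈ fiberIdeal ι x) :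
    b + c ∈ fiberIdeal ι x := by
  rw [mem_fiberIdeal_iff] at hb hc ⊢
  rintro S hS ⟨I, rfl⟩ hgen
  exact I.add_mem (hb _ hS ⟨I, rfl⟩ hgen) (hc _ hS ⟨I, rfl⟩ hgen)

lemma fiberIdeal_mul_left_mem (c : A) {b : A} (hb : b ∈ fiberIdeal ι x) :
    c * b ∈ fiberIdeal ι x := by
  rw [mem_fiberIdeal_iff] at hb ⊢
  rintro S hS ⟨I, rfl⟩ hgen
  exact I.mul_mem_left _ _ (hb _ hS ⟨I, rfl⟩ hgen)

lemma fiberIdeal_gen_mem {f : C(X, ℂ)} (hf : f x = 0) : ι f ∈ fiberIdeal ι x := by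
  rw [mem_fiberIdeal_iff]
  rintro S hS ⟨I, rfl⟩ hgen
  exact hgen ⟨f, hf, rfl⟩

lemma infDist_add_le_fiberIdeal (b c : A) :
    infDist (b + c) (fiberIdeal ι x) ≤ infDist b (fiberIdeal ι x) + infDist c (fiberIdeal ι x) := by
  refine le_of_forall_pos_le_add fun ε hε => ?_
  obtain ⟨d, hd, hbd⟩ := (infDist_lt_iff (fiberIdeal_nonempty ι x)).1
    (show infDist b (fiberIdeal ι x) < infDist b (fiberIdeal ι x) + ε / 2 by linarith)
  obtain ⟨e, he, hce⟩ := (infDist_lt_iff (fiberIdeal_nonempty ι x)).1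
    (show infDist c (fiberIdeal ι x) < infDist c (fiberIdeal ι x) + ε / 2 by linarith)
  calc infDist (b + c) (fiberIdeal ι x) ≤ dist (b + c) (d + e) :=
        infDist_le_dist_of_mem (fiberIdeal_add_mem ι x hd he)
    _ ≤ dist b d + dist c e := dist_add_add_le _ _ _ _
    _ ≤ infDist b (fiberIdeal ι x) + infDist c (fiberIdeal ι x) + ε := by linarith

lemma infDist_mul_left_le_fiberIdeal (c b : A) :
    infDist (c * b) (fiberIdeal ι x) ≤ ‖c‖ * infDist b (fiberIdeal ι x) := by
  refine le_of_forall_pos_le_add fun ε hε => ?_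
  have hc1 : (0 : ℝ) < ‖c‖ + 1 := by positivity
  have hδ : 0 < ε / (‖c‖ + 1) := by positivity
  obtain ⟨d, hd, hbd⟩ := (infDist_lt_iff (fiberIdeal_nonempty ι x)).1
    (show infDist b (fiberIdeal ι x) < infDist b (fiberIdeal ι x) + ε / (‖c‖ + 1) by linarith)
  have h1 : infDist (c * b) (fiberIdeal ι x) ≤ dist (c * b) (c * d) :=
    infDist_le_dist_of_mem (fiberIdeal_mul_left_mem ι x c hd)
  have h2 : dist (c * b) (c * d) ≤ ‖c‖ * dist b d := by
    rw [dist_eq_norm, dist_eq_norm, ← mul_sub]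
    exact norm_mul_le _ _
  have h3 : ‖c‖ * dist b d ≤ ‖c‖ * (infDist b (fiberIdeal ι x) + ε / (‖c‖ + 1)) :=
    mul_le_mul_of_nonneg_left hbd.le (norm_nonneg c)
  have h4 : ‖c‖ * (ε / (‖c‖ + 1)) ≤ ε := by
    rw [mul_div_assoc'] at *
    rw [div_le_iff₀ hc1]
    nlinarith [norm_nonneg c]
  nlinarith [norm_nonneg c]

lemma tendsto_infDist_fiberIdeal {b : A} (hb : b ∈ Ideal.span (genSet ι x)) :
    Tendsto (fun y : X => infDist b (fiberIdeal ι y)) (𝓝 x) (𝓝 0) := by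
  induction hb using Submodule.span_induction with
  | mem b hbmem =>
    obtain ⟨f, hfx, rfl⟩ := hbmem
    refine squeeze_zero (g := fun y : X => ‖f y‖) (fun y => infDist_nonneg) (fun y => ?_) ?_
    · -- infDist (ι f) (fiberIdeal ι y) ≤ ‖f y‖
      have hmem : ι (f - algebraMap ℂ C(X, ℂ) (f y)) ∈ fiberIdeal ι y :=
        fiberIdeal_gen_mem ι y (by simp)
      refine (infDist_le_dist_of_mem hmem).trans ?_
      rw [dist_eq_norm, ← map_sub, sub_sub_cancel]
      refine (NonUnitalStarAlgHom.norm_apply_le ι _).trans ?_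
      refine (ContinuousMap.norm_le _ (norm_nonneg (f y))).2 fun z => ?_
      simp [Algebra.algebraMap_eq_smul_one]
    · have : Tendsto (fun y : X => ‖f y‖) (𝓝 x) (𝓝 ‖f x‖) :=
        ((map_continuous f).tendsto x).norm
      simpa [hfx] using this
  | zero =>
    simpa using tendsto_const_nhds.congr
      (fun y : X => (infDist_zero_of_mem (fiberIdeal_zero_mem ι y)).symm)
  | add b c hb hc ihb ihc =>
    refine squeeze_zero (fun y => infDist_nonneg)
      (fun y => infDist_add_le_fiberIdeal ι y b c) ?_
    simpa using ihb.add ihc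
  | smul r b hb ihb =>
    refine squeeze_zero (fun y => infDist_nonneg)
      (fun y => by simpa [smul_eq_mul] using infDist_mul_left_le_fiberIdeal ι y r b) ?_
    simpa using tendsto_const_nhds.mul ihb

lemma span_genSet_mul_right (hcentral : ∀ (f : C(X, ℂ)) (a : A), ι f * a = a * ι f)
    {b : A} (hb : b ∈ Ideal.span (genSet ι x)) (c : A) :
    b * c ∈ Ideal.span (genSet ι x) := by
  induction hb using Submodule.span_induction with
  | mem b hbmem =>
    obtain ⟨f, hfx, rfl⟩ := hbmem
    rw [hcentral f c]
    exact Ideal.mul_mem_left _ _ (Ideal.subset_span ⟨f, hfx, rfl⟩)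
  | zero => simp
  | add b d hb hd ihb ihd => rw [add_mul]; exact Ideal.add_mem _ ihb ihd
  | smul r b hb ihb => rw [smul_eq_mul, mul_assoc]; exact Ideal.mul_mem_left _ _ ihb

lemma fiberIdeal_subset_closure_span
    (hcentral : ∀ (f : C(X, ℂ)) (a : A), ι f * a = a * ι f) :
    fiberIdeal ι x ⊆ closure (Ideal.span (genSet ι x) : Set A) := by
  apply Set.sInter_subset_of_mem
  refine ⟨isClosed_closure, ⟨TwoSidedIdeal.mk' (closure (Ideal.span (genSet ι x) : Set A))
    (subset_closure (Ideal.span (genSet ι x)).zero_mem)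
    (fun hx hy => map_mem_closure₂ continuous_add hx hy
      (fun _ ha _ hb => (Ideal.span (genSet ι x)).add_mem ha hb))
    (fun hx => map_mem_closure continuous_neg hx
      (fun _ ha => (Ideal.span (genSet ι x)).neg_mem ha))
    (fun {u v} hv => map_mem_closure (continuous_const.mul continuous_id) hv
      (fun _ ha => Ideal.mul_mem_left _ u ha))
    (fun {u v} hu => by
      have h := map_mem_closure (f := fun z : A => z * v) (continuous_mul_right v) hu
        (fun w hw => span_genSet_mul_right ι x hcentral hw v)
      simpa using h),
    TwoSidedIdeal.coe_mk' _ _ _ _ _ _⟩, ?_⟩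
  exact fun b hb => subset_closure (Ideal.subset_span hb)

end Aux

section Ker

variable {B : Type*} [CStarAlgebra B]

set_option maxHeartbeats 1000000 in
open scoped CStarAlgebra in
lemma norm_eq_infDist_ker (φ : A →⋆ₐ[ℂ] B) (a : A) :
    ‖φ a‖ = infDist a {b : A | φ b = 0} := by
  have hφcont : Continuous φ := map_continuous φ
  refine le_antisymm ?_ ?_
  · refine le_of_forall_pos_le_add fun ε hε => ?_
    have hne : ({b : A | φ b = 0} : Set A).Nonempty := ⟨0, show φ 0 = 0 from map_zero φ⟩
    obtain ⟨b, hb, hab⟩ := (infDist_lt_iff hne).1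
      (show infDist a {b : A | φ b = 0} < infDist a {b : A | φ b = 0} + ε by linarith)
    have h1 : φ a = φ (a - b) := by rw [map_sub, hb, sub_zero]
    have h2 : ‖φ a‖ ≤ dist a b := by
      rw [h1, dist_eq_norm]
      exact NonUnitalStarAlgHom.norm_apply_le φ _
    linarith
  · rcases subsingleton_or_nontrivial B with hB | hB
    · have : a ∈ {b : A | φ b = 0} := Subsingleton.elim _ _
      simpa [infDist_zero_of_mem this] using norm_nonneg (φ a)
    refine le_of_forall_pos_le_add fun ε hε => ?_
    set t : ℝ := ‖φ a‖ with ht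
    have ht0 : 0 ≤ t := norm_nonneg _
    set d : ℝ := (t + ε) ^ 2 - t ^ 2 with hdd
    have hd : 0 < d := by nlinarith
    set f : ℝ → ℝ := fun s => min 1 (max 0 ((s - t ^ 2) / d)) with hf
    have hfc : Continuous f := by fun_prop
    set c : A := star a * a with hcc
    have hc : IsSelfAdjoint c := IsSelfAdjoint.star_mul_self a
    have hφc : IsSelfAdjoint (φ c) := hc.map φ
    set u : A := cfc f c with hu
    -- the element `a * u` is in the kernel
    have hker : φ (a * u) = 0 := by
      have h1 : φ u = cfc f (φ c) := StarAlgHom.map_cfc φ f c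
      have h2 : cfc f (φ c) = 0 := by
        have : ∀ s ∈ spectrum ℝ (φ c), f s = 0 := by
          intro s hs
          have hsle : s ≤ t ^ 2 := by
            have := Real.le_norm_self s |>.trans (spectrum.norm_le_norm_of_mem hs)
            have hnc : ‖φ c‖ = t ^ 2 := by
              rw [hcc, map_mul, map_star, CStarRing.norm_star_mul_self, ht, sq]
            linarith
          simp only [hf]
          rw [max_eq_left (by rw [div_nonpos_iff]; right; constructor <;> linarith),
            min_eq_right zero_le_one]
        calc cfc f (φ c) = cfc (fun _ : ℝ => (0 : ℝ)) (φ c) := cfc_congr this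
          _ = 0 := by simp
      rw [map_mul, h1, h2, mul_zero]
    -- the distance estimate
    set g : ℝ → ℝ := fun s => 1 - f s with hg
    have hgc : Continuous g := by fun_prop
    have hveq : a - a * u = a * cfc g c := by
      have h6 : cfc g c = 1 - u := by
        rw [hu, hg]
        rw [cfc_sub _ _ c (by fun_prop) (by fun_prop)]
        simp [cfc_const_one ℝ c]
      rw [h6, mul_sub, mul_one]
    have hvsa : IsSelfAdjoint (cfc g c) := cfc_predicate g c
    have hkey : star (a * cfc g c) * (a * cfc g c) = cfc (fun s => g s * (s * g s)) c := by
      have h7 : star (a * cfc g c) * (a * cfc g c) = cfc g c * (c * cfc g c) := by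
        rw [star_mul, hvsa.star_eq, hcc]
        noncomm_ring
      have h8 : cfc (fun s : ℝ => g s * (s * g s)) c = cfc g c * (c * cfc g c) := by
        rw [cfc_mul g (fun s : ℝ => s * g s) c hgc.continuousOn
          ((continuous_id.mul hgc).continuousOn),
          cfc_mul (fun s : ℝ => s) g c continuous_id.continuousOn hgc.continuousOn,
          cfc_id' ℝ c]
      rw [h7, h8]
    have hbound : ‖star (a * cfc g c) * (a * cfc g c)‖ ≤ (t + ε) ^ 2 := by
      rw [hkey]
      refine norm_cfc_le (by positivity) fun s hs => ?_
      have hs0 : 0 ≤ s := spectrum_star_mul_self_nonneg s (hcc ▸ hs)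
      have hf0 : 0 ≤ f s := le_min zero_le_one (le_max_left _ _)
      have hf1 : f s ≤ 1 := min_le_left _ _
      have hg0 : 0 ≤ g s := by simp only [hg]; linarith
      have hg1 : g s ≤ 1 := by simp only [hg]; linarith
      rw [Real.norm_eq_abs, abs_of_nonneg (by positivity)]
      by_cases hcase : s ≤ (t + ε) ^ 2
      · have hgg : g s * g s ≤ 1 := mul_le_one₀ hg1 hg0 hg1
        calc g s * (s * g s) = s * (g s * g s) := by ring
          _ ≤ s * 1 := mul_le_mul_of_nonneg_left hgg hs0
          _ ≤ (t + ε) ^ 2 := by linarith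
      · have hfs : f s = 1 := by
          simp only [hf]
          rw [min_eq_left]
          refine le_max_of_le_right ?_
          rw [le_div_iff₀ hd]
          nlinarith
        have hgs : g s = 0 := by simp only [hg, hfs]; ring
        rw [hgs]
        norm_num
        positivity
    have hnorm : ‖a - a * u‖ ≤ t + ε := by
      rw [hveq]
      have h5 : ‖a * cfc g c‖ * ‖a * cfc g c‖ ≤ (t + ε) ^ 2 := by
        rw [← CStarRing.norm_star_mul_self]
        exact hbound
      nlinarith [norm_nonneg (a * cfc g c)]
    refine (infDist_le_dist_of_mem (show a * u ∈ {b : A | φ b = 0} from hker)).trans ?_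
    rw [dist_eq_norm]
    exact hnorm

end Ker

/-- Let `ι : C(X,ℂ) → A` be a unital `C(X)`-structure on a unital
C*-algebra `A`, and let `σ_x : A → B(H_x)` be unital *-homomorphisms with
`σ_x (ι f) = f x • 1`, such that `x ↦ ‖σ_x a‖` is lower semi-continuous for every `a`.
If moreover `ker σ_x = I_x` for every `x`, then for every `a ∈ A` the function
`x ↦ ‖σ x a‖` is continuous and coincides with `x ↦ ‖a_x‖`. -/
theorem stmt8 (ι : C(X, ℂ) →⋆ₐ[ℂ] A)
    (hcentral : ∀ (f : C(X, ℂ)) (a : A), ι f * a = a * ι f)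
    (H : X → Type*) [∀ x, NormedAddCommGroup (H x)] [∀ x, InnerProductSpace ℂ (H x)]
    [∀ x, CompleteSpace (H x)]
    (σ : ∀ x : X, A →⋆ₐ[ℂ] (H x →L[ℂ] H x))
    (hσι : ∀ (x : X) (f : C(X, ℂ)), σ x (ι f) = f x • 1)
    (hlsc : ∀ a : A, LowerSemicontinuous fun x : X => ‖σ x a‖)
    (hker : ∀ x : X, {a : A | σ x a = 0} = fiberIdeal ι x) (a : A) :
    Continuous (fun x : X => ‖σ x a‖) ∧ ∀ x : X, ‖σ x a‖ = fiberNorm ι x a := by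
  have hnorm : ∀ x : X, ‖σ x a‖ = fiberNorm ι x a := by
    intro x
    rw [norm_eq_infDist_ker (σ x) a, hker x]
    rfl
  refine ⟨?_, hnorm⟩
  rw [continuous_iff_continuousAt]
  intro x
  rw [ContinuousAt, tendsto_order]
  constructor
  · intro cval hcval
    exact hlsc a x cval hcval
  · intro cval hcval
    simp only [hnorm] at hcval ⊢
    -- approximation by an element of the algebraic span
    have hsub : fiberIdeal ι x ⊆ closure (Ideal.span (genSet ι x) : Set A) :=
      fiberIdeal_subset_closure_span ι x hcentral
    have hlt : infDist a (Ideal.span (genSet ι x) : Set A) < cval := by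
      calc infDist a (Ideal.span (genSet ι x) : Set A)
          = infDist a (closure (Ideal.span (genSet ι x) : Set A)) := (infDist_closure).symm
        _ ≤ infDist a (fiberIdeal ι x) :=
            infDist_le_infDist_of_subset hsub (fiberIdeal_nonempty ι x)
        _ < cval := hcval
    obtain ⟨b, hb, hab⟩ := (infDist_lt_iff ⟨0, (Ideal.span (genSet ι x)).zero_mem⟩).1 hlt
    have htend := tendsto_infDist_fiberIdeal ι x hb
    have hpos : 0 < cval - dist a b := by linarith
    filter_upwards [htend.eventually_lt_const hpos] with y hy
    calc fiberNorm ι y a = infDist a (fiberIdeal ι y) := rfl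
      _ ≤ infDist b (fiberIdeal ι y) + dist a b := infDist_le_infDist_add_dist
      _ < cval := by linarith
end

section
/- Let X be a compact Hausdorff space and A a unital C*-algebra with a unital C(X)-structure ι : C(X,ℂ) → A. Then ⋂_{x∈X} I_x = {0}; equivalently, if a ∈ A satisfies ‖a_x‖ = 0 for every x ∈ X, then a = 0. -/
variable {X : Type*} [TopologicalSpace X] [CompactSpace X] [T2Space X]
variable {A : Type*} [CStarAlgebra A]

private lemma zero_mem_fiberIdeal (ι : C(X, ℂ) →⋆ₐ[ℂ] A) (x : X) :
    (0 : A) ∈ fiberIdeal ι x := by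
  intro S hS
  obtain ⟨-, ⟨I, rfl⟩, -⟩ := hS
  exact I.zero_mem

private lemma isClosed_fiberIdeal (ι : C(X, ℂ) →⋆ₐ[ℂ] A) (x : X) :
    IsClosed (fiberIdeal ι x) :=
  isClosed_sInter fun _ hS => hS.1

set_option maxHeartbeats 1000000 in
/-- The fiber ideal is contained in the closure of `{ι f * c | f x = 0}`. -/
private lemma fiberIdeal_subset_closure (ι : C(X, ℂ) →⋆ₐ[ℂ] A)
    (hcentral : ∀ (f : C(X, ℂ)) (a : A), ι f * a = a * ι f) (x : X) :
    fiberIdeal ι x ⊆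
      closure {a : A | ∃ (f : C(X, ℂ)) (c : A), f x = 0 ∧ a = ι f * c} := by
  set S : Set A := {a : A | ∃ (f : C(X, ℂ)) (c : A), f x = 0 ∧ a = ι f * c} with hSdef
  have hnorm : ∀ h : C(X, ℂ), ‖ι h‖ ≤ ‖h‖ := fun h => NonUnitalStarAlgHom.norm_apply_le ι h
  -- sum of two elements of `S` is in the closure of `S`
  have hadd' : ∀ p ∈ S, ∀ q ∈ S, p + q ∈ closure S := by
    rintro _ ⟨f, c, hf, rfl⟩ _ ⟨g, d, hg, rfl⟩
    rw [Metric.mem_closure_iff]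
    intro ε hε
    set δ : ℝ := ε / (2 * (‖c‖ + ‖d‖ + 1)) with hδdef
    have hc1 : (0:ℝ) < ‖c‖ + ‖d‖ + 1 := by positivity
    have hδ : 0 < δ := by positivity
    set t : Set X := {y | δ ≤ ‖f y‖} ∪ {y | δ ≤ ‖g y‖} with htdef
    have htc : IsClosed t := by
      apply IsClosed.union
      · exact isClosed_le continuous_const (continuous_norm.comp f.continuous)
      · exact isClosed_le continuous_const (continuous_norm.comp g.continuous)
    have hxt : x ∉ t := by
      rintro (hx | hx) <;> simp only [Set.mem_setOf_eq] at hx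
      · rw [hf, norm_zero] at hx; linarith
      · rw [hg, norm_zero] at hx; linarith
    obtain ⟨u, hu0, hu1, hu01⟩ :=
      exists_continuous_zero_one_of_isClosed (isClosed_singleton (x := x)) htc
        (Set.disjoint_singleton_left.mpr hxt)
    set U : C(X, ℂ) := (⟨Complex.ofReal, Complex.continuous_ofReal⟩ : C(ℝ, ℂ)).comp u with hUdef
    have hUx : U x = 0 := by
      have h1 : u x = 0 := hu0 (Set.mem_singleton x)
      simp [hUdef, h1]
    have key : ∀ h : C(X, ℂ), (∀ y, y ∉ t → ‖h y‖ < δ) → ‖(1 - U) * h‖ ≤ δ := by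
      intro h hh
      refine (ContinuousMap.norm_le _ hδ.le).mpr fun y => ?_
      rw [ContinuousMap.mul_apply, norm_mul]
      by_cases hyt : y ∈ t
      · have h1 : u y = 1 := hu1 hyt
        have h2 : ((1 : C(X, ℂ)) - U) y = 0 := by
          simp [hUdef, h1]
        rw [h2, norm_zero, zero_mul]
        exact hδ.le
      · have h1 : ‖((1 : C(X, ℂ)) - U) y‖ ≤ 1 := by
          have h2 : ((1 : C(X, ℂ)) - U) y = ((1 - u y : ℝ) : ℂ) := by
            push_cast [hUdef]
            simp
          rw [h2, Complex.norm_real, Real.norm_eq_abs, abs_le]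
          constructor
          · linarith [(hu01 y).2]
          · linarith [(hu01 y).1]
        calc ‖((1 : C(X, ℂ)) - U) y‖ * ‖h y‖ ≤ 1 * δ :=
              mul_le_mul h1 (hh y hyt).le (norm_nonneg _) one_pos.le
          _ = δ := one_mul δ
    refine ⟨ι U * (ι f * c + ι g * d), ⟨U, ι f * c + ι g * d, hUx, rfl⟩, ?_⟩
    rw [dist_eq_norm]
    have hrw : ι f * c + ι g * d - ι U * (ι f * c + ι g * d)
        = ι ((1 - U) * f) * c + ι ((1 - U) * g) * d := by
      simp only [map_mul, map_sub, map_one]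
      noncomm_ring
    have hbound1 : ‖ι ((1 - U) * f) * c‖ ≤ δ * ‖c‖ := by
      calc ‖ι ((1 - U) * f) * c‖ ≤ ‖ι ((1 - U) * f)‖ * ‖c‖ := norm_mul_le _ _
        _ ≤ δ * ‖c‖ := by
            refine mul_le_mul_of_nonneg_right ((hnorm _).trans ?_) (norm_nonneg c)
            refine key f fun y hy => ?_
            have : ¬ (δ ≤ ‖f y‖ ∨ δ ≤ ‖g y‖) := hy
            push_neg at this
            exact this.1
    have hbound2 : ‖ι ((1 - U) * g) * d‖ ≤ δ * ‖d‖ := by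
      calc ‖ι ((1 - U) * g) * d‖ ≤ ‖ι ((1 - U) * g)‖ * ‖d‖ := norm_mul_le _ _
        _ ≤ δ * ‖d‖ := by
            refine mul_le_mul_of_nonneg_right ((hnorm _).trans ?_) (norm_nonneg d)
            refine key g fun y hy => ?_
            have : ¬ (δ ≤ ‖f y‖ ∨ δ ≤ ‖g y‖) := hy
            push_neg at this
            exact this.2
    have hδsum : δ * (‖c‖ + ‖d‖ + 1) = ε / 2 := by
      rw [hδdef]; field_simp
    calc ‖ι f * c + ι g * d - ι U * (ι f * c + ι g * d)‖
        = ‖ι ((1 - U) * f) * c + ι ((1 - U) * g) * d‖ := by rw [hrw]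
      _ ≤ ‖ι ((1 - U) * f) * c‖ + ‖ι ((1 - U) * g) * d‖ := norm_add_le _ _
      _ ≤ δ * ‖c‖ + δ * ‖d‖ := add_le_add hbound1 hbound2
      _ < ε := by nlinarith
  -- closure S is a closed two-sided ideal
  have hzero : (0 : A) ∈ S := ⟨0, 0, by simp, by simp⟩
  have hneg : ∀ y ∈ closure S, -y ∈ closure S := by
    have hmt : Set.MapsTo (fun y : A => -y) S S := by
      rintro _ ⟨f, c, hf, rfl⟩
      exact ⟨f, -c, hf, (mul_neg _ _).symm⟩
    exact fun y hy => hmt.closure continuous_neg hy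
  have hml : ∀ z : A, ∀ y ∈ closure S, z * y ∈ closure S := by
    intro z
    have hmt : Set.MapsTo (fun y : A => z * y) S S := by
      rintro _ ⟨f, c, hf, rfl⟩
      refine ⟨f, z * c, hf, ?_⟩
      show z * (ι f * c) = ι f * (z * c)
      rw [← mul_assoc, ← hcentral f z, mul_assoc]

    exact fun y hy => hmt.closure (continuous_const.mul continuous_id) hy
  have hmr : ∀ z : A, ∀ y ∈ closure S, y * z ∈ closure S := by
    intro z
    have hmt : Set.MapsTo (fun y : A => y * z) S S := by
      rintro _ ⟨f, c, hf, rfl⟩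
      exact ⟨f, c * z, hf, mul_assoc _ _ _⟩
    exact fun y hy => hmt.closure (continuous_id.mul continuous_const) hy
  have haddc : ∀ y ∈ closure S, ∀ w ∈ closure S, y + w ∈ closure S := by
    intro y hy w hw
    rw [Metric.mem_closure_iff] at hy hw ⊢
    intro ε hε
    obtain ⟨p, hp, hyp⟩ := hy (ε/3) (by linarith)
    obtain ⟨q, hq, hwq⟩ := hw (ε/3) (by linarith)
    obtain ⟨r, hr, hpr⟩ := Metric.mem_closure_iff.mp (hadd' p hp q hq) (ε/3) (by linarith)
    refine ⟨r, hr, ?_⟩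
    calc dist (y + w) r ≤ dist (y + w) (p + q) + dist (p + q) r := dist_triangle _ _ _
      _ ≤ (dist y p + dist w q) + dist (p + q) r := by
          exact add_le_add_left (dist_add_add_le _ _ _ _) _
      _ < ε := by linarith
  set I : TwoSidedIdeal A := TwoSidedIdeal.mk' (closure S)
    (subset_closure hzero)
    (fun {y w} hy hw => haddc y hy w hw)
    (fun {y} hy => hneg y hy)
    (fun {z y} hy => hml z y hy)
    (fun {y z} hy => hmr z y hy) with hIdef
  intro a ha
  refine ha _ ⟨isClosed_closure, ⟨I, ?_⟩, ?_⟩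
  · rw [hIdef]
    exact TwoSidedIdeal.coe_mk' _ _ _ _ _ _
  · rintro b ⟨f, hf, rfl⟩
    exact subset_closure ⟨f, 1, hf, (mul_one _).symm⟩

set_option maxHeartbeats 2000000 in
private lemma key_zero (ι : C(X, ℂ) →⋆ₐ[ℂ] A)
    (hcentral : ∀ (f : C(X, ℂ)) (a : A), ι f * a = a * ι f)
    (a : A) (ha : ∀ x : X, a ∈ fiberIdeal ι x) : a = 0 := by
  rcases subsingleton_or_nontrivial A with hs | hnt
  · exact Subsingleton.elim a 0
  set b : A := star a * a with hbdef
  set s : Set A := insert b (Set.range ι) with hsdef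
  have hcen : ∀ p ∈ s, p = b ∨ ∀ z : A, p * z = z * p := by
    intro p hp
    rcases Set.mem_insert_iff.mp hp with hp' | ⟨g, hg⟩
    · exact Or.inl hp'
    · exact Or.inr fun z => hg ▸ hcentral g z
  have hcomm : ∀ p ∈ s, ∀ q ∈ s, p * q = q * p := by
    intro p hp q hq
    rcases hcen p hp with hp' | h
    · rcases hcen q hq with hq' | h'
      · rw [hp', hq']
      · exact (h' p).symm
    · exact h q
  have hstarmem : ∀ q ∈ s, star q ∈ s := by
    intro q hq
    rcases Set.mem_insert_iff.mp hq with rfl | ⟨g, rfl⟩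
    · refine Set.mem_insert_iff.mpr (Or.inl ?_)
      rw [hbdef, star_mul, star_star]
    · exact Set.mem_insert_iff.mpr (Or.inr ⟨star g, map_star ι g⟩)
  have hcomm_star : ∀ p ∈ s, ∀ q ∈ s, p * star q = star q * p :=
    fun p hp q hq => hcomm p hp (star q) (hstarmem q hq)
  letI : CommRing (StarAlgebra.adjoin ℂ s) := StarAlgebra.adjoinCommRingOfComm ℂ hcomm hcomm_star
  set Bs : StarSubalgebra ℂ A := (StarAlgebra.adjoin ℂ s).topologicalClosure with hBsdef
  letI : CommRing Bs := StarSubalgebra.commRingTopologicalClosure _ fun x y => mul_comm x y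
  haveI hBclosed : IsClosed (Bs : Set A) := StarSubalgebra.isClosed_topologicalClosure _
  letI : NormedCommRing Bs := { (inferInstance : NormedRing Bs) with mul_comm := mul_comm }
  haveI : Nontrivial Bs := nontrivial_of_ne 0 1 fun h => by
    have := congrArg Subtype.val h
    simp only [ZeroMemClass.coe_zero, OneMemClass.coe_one] at this
    exact zero_ne_one (α := A) this
  have hbmem : b ∈ Bs :=
    StarSubalgebra.le_topologicalClosure _ (StarAlgebra.subset_adjoin (R := ℂ) s (Set.mem_insert _ _))
  have hιmem : ∀ f : C(X, ℂ), ι f ∈ Bs := fun f =>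
    StarSubalgebra.le_topologicalClosure _
      (StarAlgebra.subset_adjoin (R := ℂ) s (Set.mem_insert_of_mem _ ⟨f, rfl⟩))
  set b' : Bs := ⟨b, hbmem⟩ with hb'def
  have hb'sa : IsSelfAdjoint b' := by
    rw [IsSelfAdjoint]
    refine Subtype.ext ?_
    show star b = b
    rw [hbdef, star_mul, star_star]
  obtain ⟨z, hzmem, hz⟩ := spectrum.exists_nnnorm_eq_spectralRadius (a := b')
  obtain ⟨χ, hχ⟩ := WeakDual.CharacterSpace.mem_spectrum_iff_exists.mp hzmem
  have hnormz : ‖z‖ = ‖b‖ := by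
    rw [hb'sa.spectralRadius_eq_nnnorm] at hz
    have h1 : ‖z‖₊ = ‖b'‖₊ := by exact_mod_cast hz
    have h2 : ‖b'‖ = ‖b‖ := rfl
    rw [← h2]
    exact congrArg NNReal.toReal h1
  -- ι is continuous
  have hιcont : Continuous fun f : C(X, ℂ) => ι f :=
    AddMonoidHomClass.continuous_of_bound ι 1 fun f => by
      simpa using NonUnitalStarAlgHom.norm_apply_le ι f
  have hχcont : Continuous fun y : Bs => χ y := map_continuous (χ : WeakDual ℂ Bs)
  set ψ : WeakDual ℂ C(X, ℂ) :=
    { toFun := fun f => χ ⟨ι f, hιmem f⟩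
      map_add' := fun f g => by
        have h1 : (⟨ι (f + g), hιmem _⟩ : Bs) = ⟨ι f, hιmem f⟩ + ⟨ι g, hιmem g⟩ :=
          Subtype.ext (map_add ι f g)
        show χ ⟨ι (f + g), hιmem _⟩ = χ ⟨ι f, hιmem f⟩ + χ ⟨ι g, hιmem g⟩
        rw [h1, map_add]
      map_smul' := fun r f => by
        have h1 : (⟨ι (r • f), hιmem _⟩ : Bs) = r • (⟨ι f, hιmem f⟩ : Bs) :=
          Subtype.ext (map_smul ι r f)
        show χ ⟨ι (r • f), hιmem _⟩ = r • χ ⟨ι f, hιmem f⟩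
        rw [h1, map_smul]
      cont := hχcont.comp (hιcont.subtype_mk _) } with hψdef
  have hψmem : ψ ∈ WeakDual.characterSpace ℂ C(X, ℂ) := by
    rw [WeakDual.CharacterSpace.eq_set_map_one_map_mul]
    constructor
    · show χ ⟨ι 1, hιmem 1⟩ = 1
      have h1 : (⟨ι 1, hιmem 1⟩ : Bs) = 1 := Subtype.ext (map_one ι)
      rw [h1, map_one]
    · intro f g
      show χ ⟨ι (f * g), hιmem _⟩ = χ ⟨ι f, hιmem f⟩ * χ ⟨ι g, hιmem g⟩
      have h1 : (⟨ι (f * g), hιmem _⟩ : Bs) = ⟨ι f, hιmem f⟩ * ⟨ι g, hιmem g⟩ :=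
        Subtype.ext (map_mul ι f g)
      rw [h1, map_mul]
  set x₀ : X := (WeakDual.CharacterSpace.homeoEval X ℂ).symm ⟨ψ, hψmem⟩ with hx₀def
  have hx₀ : ∀ f : C(X, ℂ), f x₀ = χ ⟨ι f, hιmem f⟩ := by
    intro f
    have h1 : WeakDual.CharacterSpace.homeoEval X ℂ x₀ = ⟨ψ, hψmem⟩ :=
      (WeakDual.CharacterSpace.homeoEval X ℂ).apply_symm_apply _
    have h2 := congrArg (fun φ : WeakDual.characterSpace ℂ C(X, ℂ) => φ f) h1
    exact h2
  -- final estimate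
  have hbnorm : ∀ ε : ℝ, 0 < ε → ‖b‖ ≤ 0 + ε := by
    intro ε hε
    set ε₁ : ℝ := ε / (2 * (‖a‖ + 1)) with hε₁def
    have ha1 : (0:ℝ) < ‖a‖ + 1 := by positivity
    have hε₁ : 0 < ε₁ := by positivity
    obtain ⟨p, hpS, hap⟩ := Metric.mem_closure_iff.mp
      (fiberIdeal_subset_closure ι hcentral x₀ (ha x₀)) ε₁ hε₁
    obtain ⟨f, c, hf0, rfl⟩ := hpS
    rw [dist_eq_norm] at hap
    set δ : ℝ := ε₁ / (‖c‖ + 1) with hδdef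
    have hc1 : (0:ℝ) < ‖c‖ + 1 := by positivity
    have hδ : 0 < δ := by positivity
    set t : Set X := {y | δ ≤ ‖f y‖} with htdef
    have htc : IsClosed t := isClosed_le continuous_const (continuous_norm.comp f.continuous)
    have hx₀t : x₀ ∉ t := by
      simp only [htdef, Set.mem_setOf_eq, hf0, norm_zero, not_le]
      exact hδ
    obtain ⟨u, hu0, hu1, hu01⟩ := exists_continuous_zero_one_of_isClosed htc
      (isClosed_singleton (x := x₀)) (Set.disjoint_singleton_right.mpr hx₀t)
    set U : C(X, ℂ) := (⟨Complex.ofReal, Complex.continuous_ofReal⟩ : C(ℝ, ℂ)).comp u with hUdef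
    have hUx₀ : U x₀ = 1 := by
      have h1 : u x₀ = 1 := hu1 (Set.mem_singleton x₀)
      simp [hUdef, h1]
    have hUnorm : ‖U‖ ≤ 1 := by
      refine (ContinuousMap.norm_le _ one_pos.le).mpr fun y => ?_
      simp only [hUdef, ContinuousMap.comp_apply, ContinuousMap.coe_mk]
      rw [Complex.norm_real, Real.norm_eq_abs, abs_le]
      exact ⟨by linarith [(hu01 y).1], (hu01 y).2⟩
    have hUf : ‖U * f‖ ≤ δ := by
      refine (ContinuousMap.norm_le _ hδ.le).mpr fun y => ?_
      rw [ContinuousMap.mul_apply, norm_mul]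
      by_cases hyt : y ∈ t
      · have h1 : u y = 0 := hu0 hyt
        have h2 : U y = 0 := by simp [hUdef, h1]
        rw [h2, norm_zero, zero_mul]
        exact hδ.le
      · have h1 : ‖f y‖ < δ := lt_of_not_ge hyt
        have h2 : ‖U y‖ ≤ 1 := by
          simp only [hUdef, ContinuousMap.comp_apply, ContinuousMap.coe_mk]
          rw [Complex.norm_real, Real.norm_eq_abs, abs_le]
          exact ⟨by linarith [(hu01 y).1], (hu01 y).2⟩
        calc ‖U y‖ * ‖f y‖ ≤ 1 * δ := mul_le_mul h2 h1.le (norm_nonneg _) one_pos.le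
          _ = δ := one_mul δ
    have hstarU : star U = U := by
      ext y
      simp [hUdef, Complex.conj_ofReal]
    have est1 : ‖ι U * a‖ ≤ 2 * ε₁ := by
      have hrw : ι U * a = ι U * (a - ι f * c) + ι (U * f) * c := by
        rw [map_mul]
        noncomm_ring
      rw [hrw]
      have h1 : ‖ι U * (a - ι f * c)‖ ≤ 1 * ε₁ := by
        calc ‖ι U * (a - ι f * c)‖ ≤ ‖ι U‖ * ‖a - ι f * c‖ := norm_mul_le _ _
          _ ≤ 1 * ε₁ := mul_le_mul ((NonUnitalStarAlgHom.norm_apply_le ι U).trans hUnorm)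
              hap.le (norm_nonneg _) one_pos.le
      have h2 : ‖ι (U * f) * c‖ ≤ δ * ‖c‖ := by
        calc ‖ι (U * f) * c‖ ≤ ‖ι (U * f)‖ * ‖c‖ := norm_mul_le _ _
          _ ≤ δ * ‖c‖ := mul_le_mul ((NonUnitalStarAlgHom.norm_apply_le ι (U * f)).trans hUf)
              le_rfl (norm_nonneg _) hδ.le
      have h3 : δ * (‖c‖ + 1) = ε₁ := by
        rw [hδdef]; field_simp
      calc ‖ι U * (a - ι f * c) + ι (U * f) * c‖
          ≤ ‖ι U * (a - ι f * c)‖ + ‖ι (U * f) * c‖ := norm_add_le _ _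
        _ ≤ 1 * ε₁ + δ * ‖c‖ := add_le_add h1 h2
        _ ≤ 2 * ε₁ := by nlinarith
    have est2 : ‖ι U * b‖ ≤ 2 * ε₁ * ‖a‖ := by
      have hrw : ι U * b = star (ι U * a) * a := by
        rw [star_mul, ← map_star, hstarU, hbdef]
        rw [← mul_assoc, hcentral U (star a)]
      calc ‖ι U * b‖ = ‖star (ι U * a) * a‖ := by rw [hrw]
        _ ≤ ‖star (ι U * a)‖ * ‖a‖ := norm_mul_le _ _
        _ = ‖ι U * a‖ * ‖a‖ := by rw [norm_star]
        _ ≤ 2 * ε₁ * ‖a‖ := mul_le_mul_of_nonneg_right est1 (norm_nonneg a)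
    have hχU : χ ⟨ι U, hιmem U⟩ = 1 := by
      rw [← hx₀ U, hUx₀]
    have h5 : χ b' = χ (⟨ι U, hιmem U⟩ * b') := by
      rw [map_mul, hχU, one_mul]
    have h6 : ‖χ (⟨ι U, hιmem U⟩ * b')‖ ≤ ‖(⟨ι U, hιmem U⟩ * b' : Bs)‖ :=
      spectrum.norm_le_norm_of_mem (AlgHom.apply_mem_spectrum χ _)
    have h7 : ‖(⟨ι U, hιmem U⟩ * b' : Bs)‖ = ‖ι U * b‖ := rfl
    have h8 : ‖b‖ ≤ 2 * ε₁ * ‖a‖ := by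
      rw [← hnormz, ← hχ, h5]
      calc ‖χ (⟨ι U, hιmem U⟩ * b')‖ ≤ ‖(⟨ι U, hιmem U⟩ * b' : Bs)‖ := h6
        _ = ‖ι U * b‖ := h7
        _ ≤ 2 * ε₁ * ‖a‖ := est2
    have h9 : 2 * ε₁ * (‖a‖ + 1) = ε := by
      rw [hε₁def]; field_simp
    nlinarith [norm_nonneg a]
  have hb0 : ‖b‖ ≤ 0 := le_of_forall_pos_le_add hbnorm
  have hb : b = 0 := norm_le_zero_iff.mp hb0
  have haa : ‖a‖ * ‖a‖ = 0 := by
    rw [← CStarRing.norm_star_mul_self (x := a), ← hbdef, hb, norm_zero]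
  rw [← norm_eq_zero]
  exact mul_self_eq_zero.mp haa

/-- For a unital `C(X)`-structure `ι` on a unital C*-algebra `A`, the
intersection of the fibre ideals `I_x` is `{0}`; equivalently, an element whose fibre
norms all vanish is zero. -/
theorem stmt9 (ι : C(X, ℂ) →⋆ₐ[ℂ] A)
    (hcentral : ∀ (f : C(X, ℂ)) (a : A), ι f * a = a * ι f) :
    (⋂ x : X, fiberIdeal ι x) = {0} ∧
      ∀ a : A, (∀ x : X, fiberNorm ι x a = 0) → a = 0 := by
  have hmem : ∀ a : A, (∀ x : X, fiberNorm ι x a = 0) → ∀ x : X, a ∈ fiberIdeal ι x := by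
    intro a h x
    have hne : (fiberIdeal ι x).Nonempty := ⟨0, zero_mem_fiberIdeal ι x⟩
    have := (Metric.mem_closure_iff_infDist_zero hne).mpr (h x)
    rwa [(isClosed_fiberIdeal ι x).closure_eq] at this
  constructor
  · ext a
    simp only [Set.mem_iInter, Set.mem_singleton_iff]
    constructor
    · intro h
      exact key_zero ι hcentral a h
    · rintro rfl x
      exact zero_mem_fiberIdeal ι x
  · intro a h
    exact key_zero ι hcentral a (hmem a h)
end
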